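/- arXiv:2305.14978 — 2 statements merged into one kernel-verified Lean document; each statement's English description precedes it below -/
import Mathlib

section
/- With Q(h) and H = [-L, I] as for the once-integrated Ornstein–Uhlenbeck process with rate L, the innovation matrix satisfies H Q(h) Hᵀ = h I_d. -/
open MeasureTheory Matrix
open scoped Nat
attribute [local instance] Matrix.frobeniusNormedAddCommGroup Matrix.frobeniusNormedSpace

/-- The process noise covariance Q(h) = ∫₀^h exp(Aτ) B Bᵀ exp(Aᵀτ) dτ of the
once-integrated Ornstein–Uhlenbeck process, with A = [[0,I],[0,L]] and B = [0; I]. -/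
noncomputable def Qioup {d : ℕ} (L : Matrix (Fin d) (Fin d) ℝ) (h : ℝ) :
    Matrix (Fin d ⊕ Fin d) (Fin d ⊕ Fin d) ℝ :=
  ∫ τ in (0:ℝ)..h,
    NormedSpace.exp (τ • Matrix.fromBlocks (0 : Matrix (Fin d) (Fin d) ℝ) 1 0 L) *
      Matrix.fromRows (0 : Matrix (Fin d) (Fin d) ℝ) (1 : Matrix (Fin d) (Fin d) ℝ) *
      (Matrix.fromRows (0 : Matrix (Fin d) (Fin d) ℝ) (1 : Matrix (Fin d) (Fin d) ℝ))ᵀ *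
      NormedSpace.exp (τ • (Matrix.fromBlocks (0 : Matrix (Fin d) (Fin d) ℝ) 1 0 L)ᵀ)

attribute [local instance] Matrix.frobeniusNormedRing Matrix.frobeniusNormedAlgebra

section Aux

variable {d : ℕ} (L : Matrix (Fin d) (Fin d) ℝ)

/-- H A = 0 for H = [-L, I], A = [[0,I],[0,L]]. -/
lemma H_mul_A :
    Matrix.fromCols (-L) (1 : Matrix (Fin d) (Fin d) ℝ) *
      Matrix.fromBlocks (0 : Matrix (Fin d) (Fin d) ℝ) 1 0 L = 0 := by
  rw [Matrix.fromCols_mul_fromBlocks]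
  simp [Matrix.fromCols]
  ext i (j | j) <;> simp

/-- left multiplication by H as a continuous linear map. -/
noncomputable def lmulH :
    Matrix (Fin d ⊕ Fin d) (Fin d ⊕ Fin d) ℝ →L[ℝ] Matrix (Fin d) (Fin d ⊕ Fin d) ℝ :=
  LinearMap.toContinuousLinearMap
    { toFun := fun M => Matrix.fromCols (-L) (1 : Matrix (Fin d) (Fin d) ℝ) * M
      map_add' := fun x y => Matrix.mul_add _ x y
      map_smul' := fun c x => Matrix.mul_smul _ c x }

/-- H exp(τ A) = H. -/
lemma H_mul_exp (τ : ℝ) :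
    Matrix.fromCols (-L) (1 : Matrix (Fin d) (Fin d) ℝ) *
      NormedSpace.exp (τ • Matrix.fromBlocks (0 : Matrix (Fin d) (Fin d) ℝ) 1 0 L) =
      Matrix.fromCols (-L) (1 : Matrix (Fin d) (Fin d) ℝ) := by
  set A := Matrix.fromBlocks (0 : Matrix (Fin d) (Fin d) ℝ) 1 0 L with hA
  have hsum : Summable fun n : ℕ => ((n !⁻¹ : ℝ) • (τ • A) ^ n) :=
    NormedSpace.expSeries_summable' (𝕂 := ℝ) (τ • A)
  have h1 : HasSum (fun n : ℕ => lmulH L ((n !⁻¹ : ℝ) • (τ • A) ^ n))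
      (lmulH L (NormedSpace.exp (τ • A))) := by
    rw [NormedSpace.exp_eq_tsum ℝ]
    exact (lmulH L).hasSum hsum.hasSum
  have h2 : HasSum (fun n : ℕ => lmulH L ((n !⁻¹ : ℝ) • (τ • A) ^ n))
      (Matrix.fromCols (-L) (1 : Matrix (Fin d) (Fin d) ℝ)) := by
    have hzero : ∀ n : ℕ, n ≠ 0 → lmulH L ((n !⁻¹ : ℝ) • (τ • A) ^ n) = 0 := by
      intro n hn
      obtain ⟨m, rfl⟩ := Nat.exists_eq_succ_of_ne_zero hn
      have : Matrix.fromCols (-L) (1 : Matrix (Fin d) (Fin d) ℝ) * (τ • A) ^ (m + 1) = 0 := by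
        rw [pow_succ', ← Matrix.mul_assoc, Matrix.mul_smul, H_mul_A]
        simp [Matrix.zero_mul]
      simp only [lmulH, LinearMap.coe_toContinuousLinearMap', LinearMap.coe_mk, AddHom.coe_mk,
        Matrix.mul_smul, this, smul_zero]
    simpa [lmulH] using
      hasSum_single (f := fun n : ℕ => lmulH L ((n !⁻¹ : ℝ) • (τ • A) ^ n)) 0 hzero
  have := h1.unique h2
  simpa [lmulH] using this

/-- H B = 1. -/
lemma H_mul_B :
    Matrix.fromCols (-L) (1 : Matrix (Fin d) (Fin d) ℝ) * Matrix.fromRows (0 : Matrix (Fin d) (Fin d) ℝ) (1 : Matrix (Fin d) (Fin d) ℝ) = 1 := by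
  rw [Matrix.fromCols_mul_fromRows]
  simp

/-- The H-conjugated integrand is the identity. -/
lemma integrand_eq_one (τ : ℝ) :
    Matrix.fromCols (-L) (1 : Matrix (Fin d) (Fin d) ℝ) *
      (NormedSpace.exp (τ • Matrix.fromBlocks (0 : Matrix (Fin d) (Fin d) ℝ) 1 0 L) *
        Matrix.fromRows (0 : Matrix (Fin d) (Fin d) ℝ) (1 : Matrix (Fin d) (Fin d) ℝ) *
        (Matrix.fromRows (0 : Matrix (Fin d) (Fin d) ℝ) (1 : Matrix (Fin d) (Fin d) ℝ))ᵀ *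
        NormedSpace.exp (τ • (Matrix.fromBlocks (0 : Matrix (Fin d) (Fin d) ℝ) 1 0 L)ᵀ)) *
      (Matrix.fromCols (-L) (1 : Matrix (Fin d) (Fin d) ℝ))ᵀ = 1 := by
  have hEH : NormedSpace.exp (τ • (Matrix.fromBlocks (0 : Matrix (Fin d) (Fin d) ℝ) 1 0 L)ᵀ) *
      (Matrix.fromCols (-L) (1 : Matrix (Fin d) (Fin d) ℝ))ᵀ =
      (Matrix.fromCols (-L) (1 : Matrix (Fin d) (Fin d) ℝ))ᵀ := by
    rw [← Matrix.transpose_smul, Matrix.exp_transpose, ← Matrix.transpose_mul, H_mul_exp]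
  simp only [← Matrix.mul_assoc]
  rw [H_mul_exp, H_mul_B, Matrix.one_mul, Matrix.mul_assoc, hEH, ← Matrix.transpose_mul,
    H_mul_B, Matrix.transpose_one]

lemma integrand_continuous :
    Continuous fun τ : ℝ =>
      NormedSpace.exp (τ • Matrix.fromBlocks (0 : Matrix (Fin d) (Fin d) ℝ) 1 0 L) *
        Matrix.fromRows (0 : Matrix (Fin d) (Fin d) ℝ) (1 : Matrix (Fin d) (Fin d) ℝ) *
        (Matrix.fromRows (0 : Matrix (Fin d) (Fin d) ℝ) (1 : Matrix (Fin d) (Fin d) ℝ))ᵀ *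
        NormedSpace.exp (τ • (Matrix.fromBlocks (0 : Matrix (Fin d) (Fin d) ℝ) 1 0 L)ᵀ) := by
  have h1 : Continuous fun τ : ℝ =>
      NormedSpace.exp (τ • Matrix.fromBlocks (0 : Matrix (Fin d) (Fin d) ℝ) 1 0 L) :=
    NormedSpace.exp_continuous.comp (continuous_id.smul continuous_const)
  have h2 : Continuous fun τ : ℝ =>
      NormedSpace.exp (τ • (Matrix.fromBlocks (0 : Matrix (Fin d) (Fin d) ℝ) 1 0 L)ᵀ) :=
    NormedSpace.exp_continuous.comp (continuous_id.smul continuous_const)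
  exact ((h1.matrix_mul continuous_const).matrix_mul continuous_const).matrix_mul h2

/-- Conjugation by H as a continuous linear map. -/
noncomputable def conjH :
    Matrix (Fin d ⊕ Fin d) (Fin d ⊕ Fin d) ℝ →L[ℝ] Matrix (Fin d) (Fin d) ℝ :=
  LinearMap.toContinuousLinearMap
    { toFun := fun M => Matrix.fromCols (-L) (1 : Matrix (Fin d) (Fin d) ℝ) * M * (Matrix.fromCols (-L) (1 : Matrix (Fin d) (Fin d) ℝ))ᵀ
      map_add' := fun x y => by simp only [Matrix.mul_add, Matrix.add_mul]
      map_smul' := fun c x => by simp only [Matrix.mul_smul, Matrix.smul_mul, RingHom.id_apply] }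

end Aux

/-- The innovation matrix satisfies H Q(h) Hᵀ = h I for H = [-L, I]. -/
theorem H_Q_Ht {d : ℕ} (L : Matrix (Fin d) (Fin d) ℝ) (h : ℝ) (hh : 0 < h) :
    Matrix.fromCols (-L) (1 : Matrix (Fin d) (Fin d) ℝ) * Qioup L h * (Matrix.fromCols (-L) (1 : Matrix (Fin d) (Fin d) ℝ))ᵀ =
      h • (1 : Matrix (Fin d) (Fin d) ℝ) := by
  have key := (conjH L).intervalIntegral_comp_comm (μ := volume) (a := 0) (b := h) (f := fun τ : ℝ =>
      NormedSpace.exp (τ • Matrix.fromBlocks (0 : Matrix (Fin d) (Fin d) ℝ) 1 0 L) *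
        Matrix.fromRows (0 : Matrix (Fin d) (Fin d) ℝ) (1 : Matrix (Fin d) (Fin d) ℝ) *
        (Matrix.fromRows (0 : Matrix (Fin d) (Fin d) ℝ) (1 : Matrix (Fin d) (Fin d) ℝ))ᵀ *
        NormedSpace.exp (τ • (Matrix.fromBlocks (0 : Matrix (Fin d) (Fin d) ℝ) 1 0 L)ᵀ))
      (by exact (integrand_continuous L).intervalIntegrable 0 h)
  have lhs_eq : Matrix.fromCols (-L) (1 : Matrix (Fin d) (Fin d) ℝ) * Qioup L h * (Matrix.fromCols (-L) (1 : Matrix (Fin d) (Fin d) ℝ))ᵀ =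
      conjH L (Qioup L h) := by simp [conjH]
  rw [lhs_eq, Qioup]
  erw [← key]
  have : (fun τ : ℝ => conjH L
      (NormedSpace.exp (τ • Matrix.fromBlocks (0 : Matrix (Fin d) (Fin d) ℝ) 1 0 L) *
        Matrix.fromRows (0 : Matrix (Fin d) (Fin d) ℝ) (1 : Matrix (Fin d) (Fin d) ℝ) *
        (Matrix.fromRows (0 : Matrix (Fin d) (Fin d) ℝ) (1 : Matrix (Fin d) (Fin d) ℝ))ᵀ *
        NormedSpace.exp (τ • (Matrix.fromBlocks (0 : Matrix (Fin d) (Fin d) ℝ) 1 0 L)ᵀ))) =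
      fun _ : ℝ => (1 : Matrix (Fin d) (Fin d) ℝ) := by
    funext τ
    simpa [conjH] using integrand_eq_one L τ
  erw [this, intervalIntegral.integral_const, sub_zero]
end

section
/- Let Σ = [I; L] S [I, Lᵀ] for some symmetric S ∈ ℝ^{d×d}, let Φ(h) = [[I, hφ₁(Lh)],[0, exp(Lh)]], Q(h) the IOUP process noise covariance, and H = [-L, I]. Then the prediction covariance Σ⁻ = Φ(h) Σ Φ(h)ᵀ + Q(h) satisfies Σ⁻ Hᵀ = Q(h) Hᵀ. -/
open MeasureTheory Matrix
attribute [local instance] Matrix.frobeniusNormedAddCommGroup Matrix.frobeniusNormedSpace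

/-- The φ-functions of exponential integrators for square matrices: φ₀ = exp, and
φ_k(M) = ∫₀¹ exp(M(1-τ)) τ^{k-1}/(k-1)! dτ for k ≥ 1. -/
noncomputable def phiM {d : ℕ} (k : ℕ) (M : Matrix (Fin d) (Fin d) ℝ) : Matrix (Fin d) (Fin d) ℝ :=
  if k = 0 then NormedSpace.exp M
  else ∫ τ in (0:ℝ)..1, (τ ^ (k - 1) / (Nat.factorial (k - 1) : ℝ)) • NormedSpace.exp ((1 - τ) • M)

section aux
attribute [local instance] Matrix.frobeniusNormedRing Matrix.frobeniusNormedAlgebra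

/-- Key identity: h φ₁(hL) L = exp(hL) - 1. -/
lemma smul_phiM_mul {d : ℕ} (L : Matrix (Fin d) (Fin d) ℝ) (h : ℝ) :
    (h • phiM 1 (h • L)) * L = NormedSpace.exp (h • L) - 1 := by
  set M := h • L with hM
  have hderiv : ∀ τ : ℝ, HasDerivAt (fun τ : ℝ => NormedSpace.exp ((1 - τ) • M))
      (-(NormedSpace.exp ((1 - τ) • M) * M)) τ := by
    intro τ
    have h1 : HasDerivAt (fun τ : ℝ => 1 - τ) (-1) τ := by
      simpa using (hasDerivAt_id τ).const_sub (1:ℝ)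
    have h2 := hasDerivAt_exp_smul_const (𝕂 := ℝ) M (1 - τ)
    have h3 := HasDerivAt.scomp τ h2 h1
    simp only [neg_smul, one_smul] at h3
    exact h3
  have hcont : Continuous fun τ : ℝ => NormedSpace.exp ((1 - τ) • M) :=
    NormedSpace.exp_continuous.comp (by continuity)
  have hint : (∫ τ in (0:ℝ)..1, -(NormedSpace.exp ((1 - τ) • M) * M))
      = NormedSpace.exp ((1 - (1:ℝ)) • M) - NormedSpace.exp ((1 - (0:ℝ)) • M) :=
    intervalIntegral.integral_eq_sub_of_hasDerivAt (fun τ _ => hderiv τ)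
      (((hcont.mul continuous_const).neg).intervalIntegrable 0 1)
  have hint2 : (∫ τ in (0:ℝ)..1, NormedSpace.exp ((1 - τ) • M) * M)
      = NormedSpace.exp M - 1 := by
    rw [intervalIntegral.integral_neg] at hint
    simp only [sub_self, zero_smul, NormedSpace.exp_zero, sub_zero, one_smul] at hint
    have := neg_eq_iff_eq_neg.mp hint
    rw [this]; abel
  have hpull : (∫ τ in (0:ℝ)..1, NormedSpace.exp ((1 - τ) • M)) * M
      = ∫ τ in (0:ℝ)..1, NormedSpace.exp ((1 - τ) • M) * M := by
    have := ((ContinuousLinearMap.mul ℝ (Matrix (Fin d) (Fin d) ℝ)).flip M).intervalIntegral_comp_comm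
      (hcont.intervalIntegrable (μ := MeasureTheory.volume) 0 1)
    simpa using this.symm
  have hphi : phiM 1 M = ∫ τ in (0:ℝ)..1, NormedSpace.exp ((1 - τ) • M) := by
    simp [phiM]
  rw [hphi, smul_mul_assoc, ← mul_smul_comm, ← hM, hpull, hint2]

/-- H Φ(h) [I; L] = 0. -/
lemma HPhiR_eq_zero {d : ℕ} (L : Matrix (Fin d) (Fin d) ℝ) (h : ℝ) :
    Matrix.fromCols (-L) (1 : Matrix (Fin d) (Fin d) ℝ) *
      Matrix.fromBlocks 1 (h • phiM 1 (h • L)) 0 (NormedSpace.exp (h • L)) *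
      Matrix.fromRows (1 : Matrix (Fin d) (Fin d) ℝ) L = (0 : Matrix (Fin d) (Fin d) ℝ) := by
  set E := NormedSpace.exp (h • L) with hE
  set F := h • phiM 1 (h • L) with hF
  have hFL : F * L = E - 1 := smul_phiM_mul L h
  have hLE : L * E = E * L := ((Commute.refl L).smul_right h).exp_right
  rw [Matrix.fromCols_mul_fromBlocks]; erw [Matrix.fromCols_mul_fromRows]
  simp only [Matrix.mul_one, Matrix.one_mul, Matrix.mul_zero, add_zero, zero_add,
    neg_mul, Matrix.neg_mul]
  rw [add_mul, neg_mul, mul_assoc, hFL, mul_sub, mul_one, hLE]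
  abel
end aux

lemma main_aux {n m : Type*} [Fintype n] [Fintype m] [DecidableEq n] [DecidableEq m]
    (Φ Q : Matrix m m ℝ) (R : Matrix m n ℝ) (Hm : Matrix n m ℝ) (S : Matrix n n ℝ)
    (h0 : Hm * Φ * R = 0) :
    (Φ * (R * S * Rᵀ) * Φᵀ + Q) * Hmᵀ = Q * Hmᵀ := by
  have h1 : Rᵀ * (Φᵀ * Hmᵀ) = 0 := by
    have h2 := congrArg Matrix.transpose h0
    simpa [Matrix.transpose_mul, Matrix.mul_assoc] using h2
  rw [Matrix.add_mul]
  have h3 : Φ * (R * S * Rᵀ) * Φᵀ * Hmᵀ = Φ * (R * (S * (Rᵀ * (Φᵀ * Hmᵀ)))) := by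
    simp only [Matrix.mul_assoc]
  rw [h3, h1, Matrix.mul_zero, Matrix.mul_zero, Matrix.mul_zero, zero_add]

/-- If the filtering covariance has the structure Σ = [I; L] S [I, Lᵀ], then the prediction
covariance Σ⁻ = Φ(h) Σ Φ(h)ᵀ + Q(h) satisfies Σ⁻ Hᵀ = Q(h) Hᵀ, with H = [-L, I] and
Φ(h) = [[I, hφ₁(Lh)],[0, exp(Lh)]]. -/
theorem pred_cov_mul_Ht {d : ℕ} (L S : Matrix (Fin d) (Fin d) ℝ) (hS : S.IsSymm)
    (h : ℝ) (hh : 0 < h) :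
    (Matrix.fromBlocks 1 (h • phiM 1 (h • L)) 0 (NormedSpace.exp (h • L)) *
        (Matrix.fromRows (1 : Matrix (Fin d) (Fin d) ℝ) L * S *
          (Matrix.fromRows (1 : Matrix (Fin d) (Fin d) ℝ) L)ᵀ) *
        (Matrix.fromBlocks 1 (h • phiM 1 (h • L)) 0 (NormedSpace.exp (h • L)))ᵀ +
        Qioup L h) * (Matrix.fromCols (-L) (1 : Matrix (Fin d) (Fin d) ℝ))ᵀ =
      Qioup L h * (Matrix.fromCols (-L) (1 : Matrix (Fin d) (Fin d) ℝ))ᵀ := by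
  exact main_aux _ (Qioup L h) _ _ S (HPhiR_eq_zero L h)
end
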